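/- Let G be a reaction graph embedded in ℝ^d that decomposes as a disjoint union G = G₁ ⊔ G₂ of two sub reaction graphs whose sets of species are disjoint (i.e., supp V₁ ∩ supp V₂ = ∅, where supp V denotes the union of supports of all vertices). Then G is endotactic if and only if both G₁ and G₂ are endotactic. -/
import Mathlib


open Matrix Finset
open scoped Matrix Classical

abbrev Vec (d : ℕ) := Fin d → ℝ
abbrev Edge (d : ℕ) := Vec d × Vec d

/-- Sources of edges whose reaction vector is not orthogonal to `u`. -/
def srcU {d : ℕ} (E : Finset (Edge d)) (u : Vec d) : Set (Vec d) :=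
  {y | ∃ y', (y, y') ∈ E ∧ (y' - y) ⬝ᵥ u ≠ 0}

/-- `G` is `u`-endotactic: no `u`-endotacticity violating reaction. -/
def uEndotactic {d : ℕ} (E : Finset (Edge d)) (u : Vec d) : Prop :=
  ¬ ∃ y y', (y, y') ∈ E ∧ 0 < (y' - y) ⬝ᵥ u ∧ ∀ z ∈ srcU E u, z ⬝ᵥ u ≤ y ⬝ᵥ u

def Endotactic {d : ℕ} (E : Finset (Edge d)) : Prop := ∀ u : Vec d, uEndotactic E u

/-- Reachability by a directed path. -/
def Reach {d : ℕ} (E : Finset (Edge d)) : Vec d → Vec d → Prop :=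
  Relation.ReflTransGen (fun a b => (a, b) ∈ E)

def IsEig {d : ℕ} (A : Matrix (Fin d) (Fin d) ℝ) (μ : ℂ) : Prop :=
  ∃ v : Fin d → ℂ, v ≠ 0 ∧ (A.map Complex.ofReal).mulVec v = μ • v

/-- `y` is a vertex of the reaction graph with edge set `E`. -/
def InV {d : ℕ} (E : Finset (Edge d)) (y : Vec d) : Prop :=
  ∃ e ∈ E, e.1 = y ∨ e.2 = y

/-- Species `i` appears in the reaction graph with edge set `E`. -/
def InSpecies {d : ℕ} (E : Finset (Edge d)) (i : Fin d) : Prop :=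
  ∃ y, InV E y ∧ y i ≠ 0

lemma aux_part {d : ℕ} (E₁ E₂ : Finset (Edge d))
    (hspec : ∀ i : Fin d, ¬ (InSpecies E₁ i ∧ InSpecies E₂ i))
    (hE : Endotactic (E₁ ∪ E₂)) : Endotactic E₁ := by
  intro u hviol
  obtain ⟨y, y', hmem, hpos, hmax⟩ := hviol
  set u' : Vec d := fun i => if InSpecies E₁ i then u i else 0 with hu'
  have c1 : ∀ z : Vec d, InV E₁ z → z ⬝ᵥ u' = z ⬝ᵥ u := by
    intro z hz
    unfold dotProduct
    refine Finset.sum_congr rfl ?_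
    intro i _
    by_cases h : InSpecies E₁ i
    · simp [hu', h]
    · have : z i = 0 := by
        by_contra hne
        exact h ⟨z, hz, hne⟩
      simp [this]
  have c2 : ∀ z : Vec d, InV E₂ z → z ⬝ᵥ u' = 0 := by
    intro z hz
    unfold dotProduct
    refine Finset.sum_eq_zero ?_
    intro i _
    by_cases h : InSpecies E₁ i
    · have : z i = 0 := by
        by_contra hne
        exact hspec i ⟨h, ⟨z, hz, hne⟩⟩
      simp [this]
    · simp [hu', h]
  have hInVy : InV E₁ y := ⟨(y, y'), hmem, Or.inl rfl⟩
  have hInVy' : InV E₁ y' := ⟨(y, y'), hmem, Or.inr rfl⟩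
  apply hE u'
  refine ⟨y, y', Finset.mem_union_left _ hmem, ?_, ?_⟩
  · rwa [sub_dotProduct, c1 _ hInVy', c1 _ hInVy, ← sub_dotProduct]
  · rintro z ⟨z', hz', hne⟩
    rcases Finset.mem_union.mp hz' with h1 | h2
    · have hzV : InV E₁ z := ⟨(z, z'), h1, Or.inl rfl⟩
      have hzV' : InV E₁ z' := ⟨(z, z'), h1, Or.inr rfl⟩
      have hne' : (z' - z) ⬝ᵥ u ≠ 0 := by
        rwa [sub_dotProduct, c1 _ hzV', c1 _ hzV, ← sub_dotProduct] at hne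
      have := hmax z ⟨z', h1, hne'⟩
      rwa [c1 _ hzV, c1 _ hInVy]
    · exfalso
      apply hne
      rw [sub_dotProduct, c2 _ ⟨(z, z'), h2, Or.inr rfl⟩,
        c2 _ ⟨(z, z'), h2, Or.inl rfl⟩, sub_zero]

/-- A reaction graph decomposed as a disjoint union of two sub reaction graphs
with disjoint sets of species is endotactic iff both parts are endotactic. -/
theorem stmt5 {d : ℕ} (E₁ E₂ : Finset (Edge d))
    (hsimple₁ : ∀ e ∈ E₁, e.1 ≠ e.2) (hsimple₂ : ∀ e ∈ E₂, e.1 ≠ e.2)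
    (hdisj : Disjoint E₁ E₂)
    (hspec : ∀ i : Fin d, ¬ (InSpecies E₁ i ∧ InSpecies E₂ i)) :
    Endotactic (E₁ ∪ E₂) ↔ Endotactic E₁ ∧ Endotactic E₂ := by
  constructor
  · intro hE
    refine ⟨aux_part E₁ E₂ hspec hE, aux_part E₂ E₁ ?_ ?_⟩
    · intro i h
      exact hspec i ⟨h.2, h.1⟩
    · rwa [Finset.union_comm]
  · rintro ⟨h1, h2⟩ u ⟨y, y', hmem, hpos, hmax⟩
    rcases Finset.mem_union.mp hmem with hm | hm
    · exact h1 u ⟨y, y', hm, hpos, fun z ⟨z', hz', hne⟩ =>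
        hmax z ⟨z', Finset.mem_union_left _ hz', hne⟩⟩
    · exact h2 u ⟨y, y', hm, hpos, fun z ⟨z', hz', hne⟩ =>
        hmax z ⟨z', Finset.mem_union_right _ hz', hne⟩⟩
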